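/- Let d ≥ 1 and σ > 0, and let f_σ : ℝ → ℝ be the function f_σ(x) = ∑_{n=0}^∞ ((-1)ⁿ √π Γ((2n+d)/2) / (2ⁿ σ^{2n} n! Γ(d/2) Γ((2n+1)/2))) x^{2n}, i.e., f_σ(x) = ₁F₁(d/2; 1/2; -x²/(2σ²)). Then |f_σ(x)| ≤ 1 for every x ∈ ℝ. -/

import Mathlib

open MeasureTheory

open Real Set Filter

lemma aux_gamma_half (n : ℕ) :
    Real.Gamma ((n:ℝ) + 1/2) * (4 ^ n * n.factorial) = Real.sqrt Real.pi * (2*n).factorial := by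
  induction n with
  | zero =>
      simp only [Nat.cast_zero, zero_add, mul_zero, pow_zero, Nat.factorial_zero]
      rw [Real.Gamma_one_half_eq]; norm_num
  | succ n ih =>
      have h2 : Real.Gamma (((n:ℝ)+1) + 1/2) = ((n:ℝ)+1/2) * Real.Gamma ((n:ℝ)+1/2) := by
        rw [show ((n:ℝ)+1) + 1/2 = ((n:ℝ) + 1/2) + 1 by ring,
          Real.Gamma_add_one (by positivity)]
      have h3 : ((2*(n+1)).factorial : ℝ) = (2*(n:ℝ)+2) * ((2*(n:ℝ)+1) * (2*n).factorial) := by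
        rw [show 2*(n+1) = 2*n+1+1 by ring, Nat.factorial_succ, Nat.factorial_succ]
        push_cast; ring
      push_cast [h2, h3, Nat.factorial_succ]
      linear_combination (2*(n:ℝ)+2)*(2*(n:ℝ)+1) * ih

lemma aux_integral_pow (k : ℕ) :
    ∫ r in Ioi (0:ℝ), r ^ k * Real.exp (-(r^2)/2) =
      (2:ℝ) ^ (((k:ℝ)+1)/2) / 2 * Real.Gamma (((k:ℝ)+1)/2) := by
  have hk : (-1:ℝ) < (k:ℝ) := lt_of_lt_of_le (by norm_num) (Nat.cast_nonneg k)
  have h := integral_rpow_mul_exp_neg_mul_rpow (p := 2) (q := (k:ℝ)) (b := 1/2)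
    (by norm_num) hk (by norm_num)
  have heq : ∀ r ∈ Ioi (0:ℝ), r ^ ((k:ℝ)) * Real.exp (-(1/2) * r ^ (2:ℝ))
      = r ^ k * Real.exp (-(r^2)/2) := by
    intro r hr
    rw [Real.rpow_natCast, Real.rpow_two]
    ring_nf
  rw [setIntegral_congr_fun measurableSet_Ioi heq] at h
  rw [h]
  have : ((1:ℝ)/2) ^ (-((k:ℝ)+1)/2) = (2:ℝ) ^ (((k:ℝ)+1)/2) := by
    rw [one_div, Real.inv_rpow (by norm_num), ← Real.rpow_neg (by norm_num)]
    norm_num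
    congr 1; ring
  rw [this]; ring

lemma aux_integrable_pow (k : ℕ) :
    IntegrableOn (fun r : ℝ => r ^ k * Real.exp (-(r^2)/2)) (Ioi 0) := by
  have hk : (-1:ℝ) < (k:ℝ) := lt_of_lt_of_le (by norm_num) (Nat.cast_nonneg k)
  have h := integrableOn_rpow_mul_exp_neg_mul_sq (b := 1/2) (s := (k:ℝ)) (by norm_num) hk
  refine h.congr_fun (fun r hr => ?_) measurableSet_Ioi
  simp only [Real.rpow_natCast]
  ring_nf

/-- The one-dimensional counterpart `f_σ(x) = ₁F₁(d/2; 1/2; -x²/(2σ²))` of the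
`d`-dimensional Gaussian kernel, given by its globally convergent power series, is
bounded by `1` in absolute value. -/
theorem sliced_gaussian_abs_le_one (d : ℕ) (hd : 1 ≤ d) (σ : ℝ) (hσ : 0 < σ) (x : ℝ) :
    |∑' n : ℕ,
      ((-1 : ℝ) ^ n * Real.sqrt Real.pi * Real.Gamma ((2 * (n : ℝ) + d) / 2) /
          (2 ^ n * σ ^ (2 * n) * (n.factorial : ℝ) * Real.Gamma ((d : ℝ) / 2) *
            Real.Gamma ((2 * (n : ℝ) + 1) / 2))) * x ^ (2 * n)| ≤ 1 := by
  set t : ℝ := x / σ with ht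
  have hd1 : (1:ℝ) ≤ (d:ℝ) := by exact_mod_cast hd
  have hΓd : 0 < Real.Gamma ((d:ℝ)/2) := Real.Gamma_pos_of_pos (by linarith)
  set c : ℝ := ((2:ℝ) ^ ((d:ℝ)/2) / 2 * Real.Gamma ((d:ℝ)/2))⁻¹ with hc
  have hcpos : 0 < c := by
    rw [hc]; positivity
  -- the summand family
  set F : ℕ → ℝ → ℝ := fun n r =>
    ((-1:ℝ) ^ n * t ^ (2*n) / ((2*n).factorial : ℝ)) *
      (r ^ (2*n + (d-1)) * Real.exp (-(r^2)/2)) with hF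
  have hcast : ∀ n : ℕ, (((2*n + (d-1) : ℕ) : ℝ) + 1) / 2 = (2 * (n:ℝ) + d) / 2 := by
    intro n
    have : ((d - 1 : ℕ) : ℝ) = (d:ℝ) - 1 := by
      rw [Nat.cast_sub hd]; norm_num
    push_cast [this]; ring
  have hInt : ∀ n, Integrable (F n) (volume.restrict (Ioi 0)) := fun n =>
    (aux_integrable_pow (2*n + (d-1))).const_mul _
  have hIval : ∀ n, ∫ r in Ioi (0:ℝ), F n r =
      ((-1:ℝ) ^ n * t ^ (2*n) / ((2*n).factorial : ℝ)) *
        ((2:ℝ) ^ ((2*(n:ℝ)+d)/2) / 2 * Real.Gamma ((2*(n:ℝ)+d)/2)) := by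
    intro n
    rw [hF]
    rw [integral_const_mul, aux_integral_pow (2*n + (d-1)), hcast n]
  have hNval : ∀ n, ∫ r in Ioi (0:ℝ), ‖F n r‖ =
      (|t| ^ (2*n) / ((2*n).factorial : ℝ)) *
        ((2:ℝ) ^ ((2*(n:ℝ)+d)/2) / 2 * Real.Gamma ((2*(n:ℝ)+d)/2)) := by
    intro n
    have heq : ∀ r ∈ Ioi (0:ℝ), ‖F n r‖ =
        (|t| ^ (2*n) / ((2*n).factorial : ℝ)) * (r ^ (2*n + (d-1)) * Real.exp (-(r^2)/2)) := by
      intro r hr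
      have hr' : (0:ℝ) < r := hr
      rw [hF]
      simp only [Real.norm_eq_abs, abs_mul, abs_div, abs_pow, abs_neg, abs_one, one_pow,
        one_mul, Nat.abs_cast, Real.abs_exp, abs_of_pos hr']
    rw [setIntegral_congr_fun measurableSet_Ioi heq, integral_const_mul,
      aux_integral_pow (2*n + (d-1)), hcast n]
  -- summability of the norms
  have hSum : Summable fun n => ∫ r in Ioi (0:ℝ), ‖F n r‖ := by
    set g : ℕ → ℝ := fun n => (|t| ^ (2*n) / ((2*n).factorial : ℝ)) *
        ((2:ℝ) ^ ((2*(n:ℝ)+d)/2) / 2 * Real.Gamma ((2*(n:ℝ)+d)/2)) with hg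
    have hgsum : Summable g := by
      apply summable_of_ratio_norm_eventually_le (r := 1/2) (by norm_num)
      filter_upwards [eventually_ge_atTop (max d (⌈8 * t^2⌉₊ + 1))] with n hn
      have hnd : (d:ℝ) ≤ n := by exact_mod_cast le_trans (le_max_left _ _) hn
      have hnt : 8 * t^2 ≤ (n:ℝ) := by
        have h1 : ⌈8 * t^2⌉₊ + 1 ≤ n := le_trans (le_max_right _ _) hn
        calc 8 * t^2 ≤ (⌈8 * t^2⌉₊ : ℝ) := Nat.le_ceil _
          _ ≤ (n:ℝ) := by exact_mod_cast le_trans (Nat.le_succ _) h1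
      have hn1 : (1:ℝ) ≤ (n:ℝ) := le_trans hd1 hnd
      have hΓpos : 0 < Real.Gamma ((2*(n:ℝ)+d)/2) := Real.Gamma_pos_of_pos (by positivity)
      have hgnn : 0 ≤ g n := by
        rw [hg]; positivity
      -- exact ratio identity
      have hratio : g (n+1) = (t^2 * (2*(n:ℝ)+d) / ((2*(n:ℝ)+2) * (2*(n:ℝ)+1))) * g n := by
        have e1 : Real.Gamma ((2*((n:ℝ)+1)+d)/2) = ((2*(n:ℝ)+d)/2) * Real.Gamma ((2*(n:ℝ)+d)/2) := by
          rw [show (2*((n:ℝ)+1)+d)/2 = (2*(n:ℝ)+d)/2 + 1 by ring,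
            Real.Gamma_add_one (by positivity)]
        have e2 : ((2*(n+1)).factorial : ℝ) = (2*(n:ℝ)+2) * ((2*(n:ℝ)+1) * (2*n).factorial) := by
          rw [show 2*(n+1) = 2*n+1+1 by ring, Nat.factorial_succ, Nat.factorial_succ]
          push_cast; ring
        have e3 : |t| ^ (2*(n+1)) = t^2 * |t| ^ (2*n) := by
          rw [show 2*(n+1) = 2*n + 2 by ring, pow_add, sq_abs]; ring
        have e4 : (2:ℝ) ^ ((2*((n:ℝ)+1)+d)/2) = 2 * (2:ℝ) ^ ((2*(n:ℝ)+d)/2) := by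
          rw [show (2*((n:ℝ)+1)+d)/2 = (2*(n:ℝ)+d)/2 + 1 by ring,
            Real.rpow_add (by norm_num), Real.rpow_one]; ring
        have hfacpos : (0:ℝ) < ((2*n).factorial : ℝ) := by positivity
        rw [hg]
        simp only [Nat.cast_add, Nat.cast_one] at e1 e4 ⊢
        rw [e1, e2, e3, e4]
        field_simp
      have hqle : t^2 * (2*(n:ℝ)+d) / ((2*(n:ℝ)+2) * (2*(n:ℝ)+1)) ≤ 1/2 := by
        rw [div_le_iff₀ (by nlinarith)]
        nlinarith [sq_nonneg t, sq_nonneg ((n:ℝ) - 1)]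
      have hqnn : 0 ≤ t^2 * (2*(n:ℝ)+d) / ((2*(n:ℝ)+2) * (2*(n:ℝ)+1)) := by positivity
      rw [Real.norm_eq_abs, Real.norm_eq_abs, abs_of_nonneg hgnn, hratio,
        abs_of_nonneg (mul_nonneg hqnn hgnn)]
      exact mul_le_mul_of_nonneg_right hqle hgnn
    exact hgsum.congr fun n => (hNval n).symm
  -- swap sum and integral
  have hswap : ∑' n, ∫ r in Ioi (0:ℝ), F n r =
      ∫ r in Ioi (0:ℝ), Real.cos (t * r) * (r ^ (d-1) * Real.exp (-(r^2)/2)) := by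
    rw [integral_tsum_of_summable_integral_norm hInt hSum]
    refine setIntegral_congr_fun measurableSet_Ioi (fun r hr => ?_)
    have hs := (Real.hasSum_cos (t * r)).mul_right (r ^ (d-1) * Real.exp (-(r^2)/2))
    have : (fun n : ℕ => ((-1:ℝ)^n * (t*r)^(2*n) / ((2*n).factorial : ℝ)) *
        (r ^ (d-1) * Real.exp (-(r^2)/2))) = fun n => F n r := by
      funext n
      rw [hF]
      simp only [mul_pow, pow_add]
      ring
    rw [this] at hs
    exact hs.tsum_eq
  -- identify the original series termwise
  have hterm : ∀ n : ℕ,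
      ((-1 : ℝ) ^ n * Real.sqrt Real.pi * Real.Gamma ((2 * (n : ℝ) + d) / 2) /
          (2 ^ n * σ ^ (2 * n) * (n.factorial : ℝ) * Real.Gamma ((d : ℝ) / 2) *
            Real.Gamma ((2 * (n : ℝ) + 1) / 2))) * x ^ (2 * n)
        = c * ∫ r in Ioi (0:ℝ), F n r := by
    intro n
    rw [hIval n, hc]
    have hΓh : Real.Gamma ((2*(n:ℝ)+1)/2) = Real.sqrt Real.pi * (2*n).factorial / (4^n * n.factorial) := by
      have := aux_gamma_half n
      have hpos : (0:ℝ) < 4^n * n.factorial := by positivity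
      rw [show (2*(n:ℝ)+1)/2 = (n:ℝ) + 1/2 by ring]
      field_simp at this ⊢
      linarith [this]
    have hx : x ^ (2*n) = t ^ (2*n) * σ ^ (2*n) := by
      rw [ht, div_pow, div_mul_cancel₀]
      positivity
    have h2r : (2:ℝ) ^ ((2*(n:ℝ)+d)/2) = 2^n * (2:ℝ) ^ ((d:ℝ)/2) := by
      rw [show (2*(n:ℝ)+d)/2 = (n:ℝ) + (d:ℝ)/2 by ring, Real.rpow_add (by norm_num),
        Real.rpow_natCast]
    have hπ : (0:ℝ) < Real.sqrt Real.pi := Real.sqrt_pos.mpr Real.pi_pos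
    have hfac : (0:ℝ) < (n.factorial : ℝ) := by positivity
    have hfac2 : (0:ℝ) < ((2*n).factorial : ℝ) := by positivity
    have h2d : (0:ℝ) < (2:ℝ) ^ ((d:ℝ)/2) := by positivity
    have h4 : (4:ℝ)^n = 2^(n*2) := by
      rw [mul_comm, pow_mul]; norm_num
    rw [hΓh, hx, h2r]
    field_simp
    rw [h4]
    ring
  calc |∑' n : ℕ, ((-1 : ℝ) ^ n * Real.sqrt Real.pi * Real.Gamma ((2 * (n : ℝ) + d) / 2) /
          (2 ^ n * σ ^ (2 * n) * (n.factorial : ℝ) * Real.Gamma ((d : ℝ) / 2) *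
            Real.Gamma ((2 * (n : ℝ) + 1) / 2))) * x ^ (2 * n)|
      = |c * ∫ r in Ioi (0:ℝ), Real.cos (t * r) * (r ^ (d-1) * Real.exp (-(r^2)/2))| := by
        rw [tsum_congr hterm, tsum_mul_left, hswap]
    _ = c * |∫ r in Ioi (0:ℝ), Real.cos (t * r) * (r ^ (d-1) * Real.exp (-(r^2)/2))| := by
        rw [abs_mul, abs_of_pos hcpos]
    _ ≤ c * ((2:ℝ) ^ ((d:ℝ)/2) / 2 * Real.Gamma ((d:ℝ)/2)) := by
        refine mul_le_mul_of_nonneg_left ?_ hcpos.le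
        have hb : ‖∫ r in Ioi (0:ℝ), Real.cos (t * r) * (r ^ (d-1) * Real.exp (-(r^2)/2))‖
            ≤ ∫ r in Ioi (0:ℝ), r ^ (d-1) * Real.exp (-(r^2)/2) := by
          refine norm_integral_le_of_norm_le (aux_integrable_pow (d-1)) ?_
          refine (ae_restrict_iff' measurableSet_Ioi).mpr (ae_of_all _ fun r hr => ?_)
          have hr' : (0:ℝ) < r := hr
          rw [Real.norm_eq_abs, abs_mul]
          have h1 : |Real.cos (t*r)| ≤ 1 := Real.abs_cos_le_one _
          have h2 : 0 ≤ r ^ (d-1) * Real.exp (-(r^2)/2) := by positivity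
          calc |Real.cos (t*r)| * |r ^ (d-1) * Real.exp (-(r^2)/2)|
              ≤ 1 * |r ^ (d-1) * Real.exp (-(r^2)/2)| :=
                mul_le_mul_of_nonneg_right h1 (abs_nonneg _)
            _ = r ^ (d-1) * Real.exp (-(r^2)/2) := by rw [one_mul, abs_of_nonneg h2]
        rw [Real.norm_eq_abs] at hb
        refine hb.trans_eq ?_
        rw [aux_integral_pow (d-1)]
        have : (((d-1:ℕ):ℝ) + 1)/2 = (d:ℝ)/2 := by
          rw [Nat.cast_sub hd]; push_cast; ring
        rw [this]
    _ = 1 := by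
        rw [hc, inv_mul_cancel₀]
        positivity
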